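/- Let γ : [0, ∞) → ℝ be a differentiable function satisfying dγ/dt = sin(γ) sin(π/4 - 2γ) cos(γ + π/4) with 0 < γ(0) < π/4. Then 0 < γ(t) < π/4 for all t ≥ 0, and γ(t) → π/8 as t → ∞. -/

import Mathlib

open Real Filter Set

/-- Barrier lemma: if `|y'| ≤ K |y|` on `[0,∞)` and `y 0 > 0`, then `y` stays positive. -/
lemma my_barrier (y g : ℝ → ℝ) (K : ℝ)
    (hy : ∀ t ∈ Set.Ici (0:ℝ), HasDerivWithinAt y (g t) (Set.Ici (0:ℝ)) t)
    (hb : ∀ t ∈ Set.Ici (0:ℝ), |g t| ≤ K * |y t|)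
    (h0 : 0 < y 0) : ∀ t ∈ Set.Ici (0:ℝ), 0 < y t := by
  have ycont : ContinuousOn y (Set.Ici (0:ℝ)) := fun t ht => (hy t ht).continuousWithinAt
  by_contra hcon
  push_neg at hcon
  obtain ⟨t1, ht1, hyt1⟩ := hcon
  set S : Set ℝ := Set.Ici (0:ℝ) ∩ y ⁻¹' Set.Iic 0 with hSdef
  have hSclosed : IsClosed S := ycont.preimage_isClosed_of_isClosed isClosed_Ici isClosed_Iic
  have hSne : S.Nonempty := ⟨t1, ht1, hyt1⟩
  have hSbdd : BddBelow S := ⟨0, fun x hx => hx.1⟩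
  set t0 := sInf S with ht0def
  have ht0S : t0 ∈ S := hSclosed.csInf_mem hSne hSbdd
  have ht0nonneg : (0:ℝ) ≤ t0 := ht0S.1
  have hyt0 : y t0 ≤ 0 := ht0S.2
  have ht0pos : 0 < t0 := by
    rcases lt_or_eq_of_le ht0nonneg with h | h
    · exact h
    · exact absurd hyt0 (by rw [← h]; exact not_le.2 h0)
  have hposlt : ∀ t, 0 ≤ t → t < t0 → 0 < y t := by
    intro t ht htlt
    by_contra hc
    exact absurd (csInf_le hSbdd ⟨ht, not_lt.1 hc⟩) (not_le.2 htlt)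
  -- z = y * exp(K t) is monotone on [0, t0]
  set z : ℝ → ℝ := fun t => y t * Real.exp (K * t) with hzdef
  have hzmono : MonotoneOn z (Set.Icc 0 t0) := by
    apply monotoneOn_of_hasDerivWithinAt_nonneg (f' := fun t =>
        g t * Real.exp (K * t) + y t * (K * Real.exp (K * t))) (convex_Icc 0 t0)
    · exact (ycont.mono (Set.Icc_subset_Ici_self)).mul
        (Real.continuous_exp.comp (continuous_const.mul continuous_id)).continuousOn
    · intro t ht
      rw [interior_Icc] at ht
      have hsub : Set.Ioo (0:ℝ) t0 ⊆ Set.Ici 0 := fun x hx => le_of_lt hx.1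
      have hexp : HasDerivAt (fun t => Real.exp (K * t)) (K * Real.exp (K * t)) t := by
        have := (Real.hasDerivAt_exp (K * t)).comp t ((hasDerivAt_id t).const_mul K)
        simpa [mul_comm, Function.comp_def] using this
      rw [interior_Icc]
      exact ((hy t (hsub ht)).mono hsub).mul (hexp.hasDerivWithinAt)
    · intro t ht
      rw [interior_Icc] at ht
      have hyt : 0 < y t := hposlt t (le_of_lt ht.1) ht.2
      have hgt : -(K * y t) ≤ g t := by
        have := hb t (le_of_lt ht.1)
        rw [abs_of_pos hyt] at this
        exact neg_le_of_abs_le this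
      have : 0 ≤ (g t + K * y t) * Real.exp (K * t) := by
        apply mul_nonneg _ (Real.exp_pos _).le
        linarith
      calc (0:ℝ) ≤ (g t + K * y t) * Real.exp (K * t) := this
        _ = g t * Real.exp (K * t) + y t * (K * Real.exp (K * t)) := by ring
  have h01 : z 0 ≤ z t0 := hzmono (Set.mem_Icc.2 ⟨le_refl 0, ht0nonneg⟩)
    (Set.mem_Icc.2 ⟨ht0nonneg, le_refl t0⟩) ht0nonneg
  have hz0 : 0 < z 0 := by simpa [hzdef] using h0
  have hzt0 : z t0 ≤ 0 := mul_nonpos_of_nonpos_of_nonneg hyt0 (Real.exp_pos _).le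
  linarith

/-- Escape lemma: a solution of `y' = F(y)` with `F > 0` on `[a,b]` cannot stay in `[a,b]`. -/
lemma my_escape (y F : ℝ → ℝ) (hF : Continuous F) (a b : ℝ)
    (hy : ∀ t ∈ Set.Ici (0:ℝ), HasDerivWithinAt y (F (y t)) (Set.Ici (0:ℝ)) t)
    (hmem : ∀ t ∈ Set.Ici (0:ℝ), y t ∈ Set.Icc a b)
    (hFpos : ∀ x ∈ Set.Icc a b, 0 < F x) : False := by
  have ycont : ContinuousOn y (Set.Ici (0:ℝ)) := fun t ht => (hy t ht).continuousWithinAt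
  have hab : a ≤ b := by
    have := hmem 0 (Set.self_mem_Ici); exact le_trans this.1 this.2
  obtain ⟨x0, hx0, hmin⟩ := isCompact_Icc.exists_isMinOn (Set.nonempty_Icc.2 hab)
    hF.continuousOn
  set c := F x0 with hcdef
  have hc : 0 < c := hFpos x0 hx0
  have hmonoh : MonotoneOn (fun t => y t - c * t) (Set.Ici (0:ℝ)) := by
    apply monotoneOn_of_hasDerivWithinAt_nonneg (f' := fun t => F (y t) - c) (convex_Ici 0)
    · exact ycont.sub (continuous_const.mul continuous_id).continuousOn
    · intro t ht
      rw [interior_Ici] at ht ⊢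
      have hsub : Set.Ioi (0:ℝ) ⊆ Set.Ici 0 := Set.Ioi_subset_Ici_self
      have : HasDerivAt (fun t : ℝ => c * t) c t := by
        simpa using (hasDerivAt_id t).const_mul c
      exact ((hy t (hsub ht)).mono hsub).sub this.hasDerivWithinAt
    · intro t ht
      rw [interior_Ici] at ht
      have h := hmin (hmem t (Set.Ioi_subset_Ici_self ht))
      simp only [Set.mem_setOf_eq] at h
      simp only [hcdef]
      linarith
  set T := (b - a) / c + 1 with hTdef
  have hT : (0:ℝ) ≤ T := by
    have : 0 ≤ (b - a) / c := div_nonneg (by linarith) hc.le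
    simp only [hTdef]; linarith
  have h2 := hmonoh (Set.self_mem_Ici) hT hT
  simp only [mul_zero, sub_zero] at h2
  have hcT : c * T = (b - a) + c := by
    rw [hTdef, mul_add, mul_one, mul_div_assoc', mul_comm c, mul_div_assoc, div_self hc.ne', mul_one]
  have hy0 : a ≤ y 0 := (hmem 0 Set.self_mem_Ici).1
  have hyT : y T ≤ b := (hmem T hT).2
  have : y T ≥ y 0 + c * T := by linarith
  rw [hcT] at this
  linarith

lemma my_escape' (y F : ℝ → ℝ) (hF : Continuous F) (a b : ℝ)
    (hy : ∀ t ∈ Set.Ici (0:ℝ), HasDerivWithinAt y (F (y t)) (Set.Ici (0:ℝ)) t)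
    (hmem : ∀ t ∈ Set.Ici (0:ℝ), y t ∈ Set.Icc a b)
    (hFneg : ∀ x ∈ Set.Icc a b, F x < 0) : False := by
  apply my_escape (fun t => -y t) (fun x => -(F (-x))) (by continuity) (-b) (-a)
  · intro t ht
    have := (hy t ht).neg
    simp only [neg_neg]
    exact this
  · intro t ht
    have := hmem t ht
    exact ⟨neg_le_neg this.2, neg_le_neg this.1⟩
  · intro x hx
    have : -x ∈ Set.Icc a b := ⟨by linarith [hx.2], by linarith [hx.1]⟩
    have := hFneg _ this
    linarith


lemma my_abs_le₁ (x : ℝ) :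
    |Real.sin x * Real.sin (π / 4 - 2 * x) * Real.cos (x + π / 4)| ≤ |x| := by
  calc |Real.sin x * Real.sin (π / 4 - 2 * x) * Real.cos (x + π / 4)|
      = |Real.sin x| * |Real.sin (π / 4 - 2 * x)| * |Real.cos (x + π / 4)| := by
        rw [abs_mul, abs_mul]
    _ ≤ |x| * 1 * 1 :=
        mul_le_mul (mul_le_mul Real.abs_sin_le_abs (Real.abs_sin_le_one _)
          (abs_nonneg _) (abs_nonneg _)) (Real.abs_cos_le_one _) (abs_nonneg _)
          (by positivity)
    _ = |x| := by ring

lemma my_abs_le₂ (x : ℝ) :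
    |Real.sin x * Real.sin (π / 4 - 2 * x) * Real.cos (x + π / 4)| ≤ |π / 4 - x| := by
  have hc : Real.cos (x + π / 4) = Real.sin (π / 4 - x) := by
    rw [← Real.sin_pi_div_two_sub]; congr 1; ring
  calc |Real.sin x * Real.sin (π / 4 - 2 * x) * Real.cos (x + π / 4)|
      = |Real.sin x| * |Real.sin (π / 4 - 2 * x)| * |Real.cos (x + π / 4)| := by
        rw [abs_mul, abs_mul]
    _ ≤ 1 * 1 * |π / 4 - x| :=
        mul_le_mul (mul_le_mul (Real.abs_sin_le_one _) (Real.abs_sin_le_one _)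
          (abs_nonneg _) zero_le_one) (by rw [hc]; exact Real.abs_sin_le_abs)
          (abs_nonneg _) (by norm_num)
    _ = |π / 4 - x| := by ring

lemma my_abs_le₃ (x : ℝ) :
    |Real.sin x * Real.sin (π / 4 - 2 * x) * Real.cos (x + π / 4)| ≤ 2 * |π / 8 - x| := by
  have hs : |Real.sin (π / 4 - 2 * x)| ≤ 2 * |π / 8 - x| := by
    have h1 : π / 4 - 2 * x = 2 * (π / 8 - x) := by ring
    rw [h1]
    calc |Real.sin (2 * (π / 8 - x))| ≤ |2 * (π / 8 - x)| := Real.abs_sin_le_abs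
      _ = 2 * |π / 8 - x| := by rw [abs_mul]; norm_num
  calc |Real.sin x * Real.sin (π / 4 - 2 * x) * Real.cos (x + π / 4)|
      = |Real.sin x| * |Real.sin (π / 4 - 2 * x)| * |Real.cos (x + π / 4)| := by
        rw [abs_mul, abs_mul]
    _ ≤ 1 * (2 * |π / 8 - x|) * 1 :=
        mul_le_mul (mul_le_mul (Real.abs_sin_le_one _) hs (abs_nonneg _) zero_le_one)
          (Real.abs_cos_le_one _) (abs_nonneg _) (by positivity)
    _ = 2 * |π / 8 - x| := by ring

lemma my_fpos (x : ℝ) (h0 : 0 < x) (h1 : x < π / 8) :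
    0 < Real.sin x * Real.sin (π / 4 - 2 * x) * Real.cos (x + π / 4) := by
  have hπ := Real.pi_pos
  apply mul_pos (mul_pos _ _)
  · apply Real.cos_pos_of_mem_Ioo; constructor <;> [linarith; linarith]
  · exact Real.sin_pos_of_pos_of_lt_pi h0 (by linarith)
  · exact Real.sin_pos_of_pos_of_lt_pi (by linarith) (by linarith)

lemma my_fneg (x : ℝ) (h0 : π / 8 < x) (h1 : x < π / 4) :
    Real.sin x * Real.sin (π / 4 - 2 * x) * Real.cos (x + π / 4) < 0 := by
  have hπ := Real.pi_pos
  apply mul_neg_of_neg_of_pos (mul_neg_of_pos_of_neg _ _)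
  · apply Real.cos_pos_of_mem_Ioo; constructor <;> [linarith; linarith]
  · exact Real.sin_pos_of_pos_of_lt_pi (by linarith) (by linarith)
  · exact Real.sin_neg_of_neg_of_neg_pi_lt (by linarith) (by linarith)

/-- for the reduced ODE `dγ/dt = sin(γ) sin(π/4 - 2γ) cos(γ + π/4)` with
`0 < γ(0) < π/4`, the solution stays in `(0, π/4)` and converges to `π/8`. -/
theorem reduced_ode_converges_to_eight_fold
    (γ : ℝ → ℝ)
    (hode : ∀ t ∈ Set.Ici (0 : ℝ), HasDerivWithinAt γ
      (Real.sin (γ t) * Real.sin (π / 4 - 2 * γ t) * Real.cos (γ t + π / 4))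
      (Set.Ici (0 : ℝ)) t)
    (h0 : 0 < γ 0) (h1 : γ 0 < π / 4) :
    (∀ t ∈ Set.Ici (0 : ℝ), 0 < γ t ∧ γ t < π / 4) ∧
    Filter.Tendsto γ Filter.atTop (nhds (π / 8)) := by
  set F : ℝ → ℝ := fun x => Real.sin x * Real.sin (π / 4 - 2 * x) * Real.cos (x + π / 4)
    with hFdef
  have hFcont : Continuous F := by
    apply Continuous.mul
    apply Continuous.mul
    · exact Real.continuous_sin
    · exact Real.continuous_sin.comp (continuous_const.sub (continuous_const.mul continuous_id))
    · exact Real.continuous_cos.comp (continuous_id.add continuous_const)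
  have hode' : ∀ t ∈ Set.Ici (0:ℝ), HasDerivWithinAt γ (F (γ t)) (Set.Ici (0:ℝ)) t := hode
  have γcont : ContinuousOn γ (Set.Ici (0:ℝ)) := fun t ht => (hode' t ht).continuousWithinAt
  have hπ := Real.pi_pos
  -- positivity
  have hpos : ∀ t ∈ Set.Ici (0:ℝ), 0 < γ t :=
    my_barrier γ (fun t => F (γ t)) 1 hode'
      (fun t _ => by simp only [one_mul]; exact my_abs_le₁ (γ t)) h0
  -- upper bound π/4
  have hub4 : ∀ t ∈ Set.Ici (0:ℝ), 0 < π / 4 - γ t :=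
    my_barrier (fun t => π / 4 - γ t) (fun t => -(F (γ t))) 1
      (fun t ht => (hode' t ht).const_sub (π / 4))
      (fun t _ => by simp only [one_mul, abs_neg]; exact my_abs_le₂ (γ t)) (by linarith)
  refine ⟨fun t ht => ⟨hpos t ht, by linarith [hub4 t ht]⟩, ?_⟩
  rcases lt_trichotomy (γ 0) (π / 8) with hlt | heq0 | hgt
  · -- increasing case
    have hub8 : ∀ t ∈ Set.Ici (0:ℝ), γ t < π / 8 := by
      have h := my_barrier (fun t => π / 8 - γ t) (fun t => -(F (γ t))) 2
        (fun t ht => (hode' t ht).const_sub (π / 8))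
        (fun t _ => by simp only [abs_neg]; exact my_abs_le₃ (γ t)) (by linarith)
      intro t ht; linarith [h t ht]
    have hmono : MonotoneOn γ (Set.Ici (0:ℝ)) := by
      apply monotoneOn_of_hasDerivWithinAt_nonneg (f' := fun t => F (γ t)) (convex_Ici 0) γcont
      · intro t ht
        rw [interior_Ici] at ht ⊢
        exact (hode' t (Set.Ioi_subset_Ici_self ht)).mono Set.Ioi_subset_Ici_self
      · intro t ht
        rw [interior_Ici] at ht
        exact (my_fpos _ (hpos t (Set.Ioi_subset_Ici_self ht)) (hub8 t (Set.Ioi_subset_Ici_self ht))).le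
    rw [tendsto_order]
    constructor
    · intro a ha
      have hex : ∃ t0, 0 ≤ t0 ∧ a < γ t0 := by
        by_contra hc
        push_neg at hc
        refine my_escape γ F hFcont (γ 0) a hode' (fun t ht => ?_) (fun x hx => ?_)
        · exact ⟨hmono Set.self_mem_Ici ht ht, hc t ht⟩
        · exact my_fpos x (lt_of_lt_of_le (hpos 0 Set.self_mem_Ici) hx.1)
            (lt_of_le_of_lt hx.2 ha)
      obtain ⟨t0, ht0, hat0⟩ := hex
      filter_upwards [eventually_ge_atTop t0] with t ht
      exact lt_of_lt_of_le hat0 (hmono ht0 (le_trans ht0 ht) ht)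
    · intro a ha
      filter_upwards [eventually_ge_atTop (0:ℝ)] with t ht
      exact lt_trans (hub8 t ht) ha
  · -- constant case
    have heq : ∀ t ∈ Set.Ici (0:ℝ), γ t = π / 8 := by
      intro b hb
      have key := norm_le_gronwallBound_of_norm_deriv_right_le
        (f := fun t => γ t - π / 8) (f' := fun t => F (γ t)) (δ := 0) (K := 2) (ε := 0)
        (a := 0) (b := b)
        ((γcont.mono Set.Icc_subset_Ici_self).sub continuousOn_const)
        (fun x hx => ((hode' x hx.1).sub_const _).mono (Set.Ici_subset_Ici.2 hx.1))
        (by simp [heq0])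
        (fun x _ => by
          have h3 := my_abs_le₃ (γ x)
          simp only [Real.norm_eq_abs, add_zero]
          rw [abs_sub_comm]
          exact h3)
        b (Set.mem_Icc.2 ⟨hb, le_refl b⟩)
      rw [gronwallBound_ε0] at key
      simp only [Real.norm_eq_abs, zero_mul] at key
      have : |γ b - π / 8| ≤ 0 := key
      have := abs_nonneg (γ b - π / 8)
      have : |γ b - π / 8| = 0 := le_antisymm key (abs_nonneg _)
      rw [abs_eq_zero] at this
      linarith
    exact tendsto_const_nhds.congr'
      ((eventually_ge_atTop (0:ℝ)).mono fun t ht => (heq t ht).symm)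
  · -- decreasing case
    have hlb8 : ∀ t ∈ Set.Ici (0:ℝ), π / 8 < γ t := by
      have h := my_barrier (fun t => γ t - π / 8) (fun t => F (γ t)) 2
        (fun t ht => (hode' t ht).sub_const (π / 8))
        (fun t _ => by
          have h3 := my_abs_le₃ (γ t)
          rw [abs_sub_comm] at h3
          exact h3) (by linarith)
      intro t ht; linarith [h t ht]
    have hanti : AntitoneOn γ (Set.Ici (0:ℝ)) := by
      apply antitoneOn_of_hasDerivWithinAt_nonpos (f' := fun t => F (γ t)) (convex_Ici 0) γcont
      · intro t ht
        rw [interior_Ici] at ht ⊢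
        exact (hode' t (Set.Ioi_subset_Ici_self ht)).mono Set.Ioi_subset_Ici_self
      · intro t ht
        rw [interior_Ici] at ht
        exact (my_fneg _ (hlb8 t (Set.Ioi_subset_Ici_self ht)) (by linarith [hub4 t (Set.Ioi_subset_Ici_self ht)])).le
    rw [tendsto_order]
    constructor
    · intro a ha
      filter_upwards [eventually_ge_atTop (0:ℝ)] with t ht
      exact lt_trans ha (hlb8 t ht)
    · intro a ha
      have hex : ∃ t0, 0 ≤ t0 ∧ γ t0 < a := by
        by_contra hc
        push_neg at hc
        refine my_escape' γ F hFcont a (γ 0) hode' (fun t ht => ?_) (fun x hx => ?_)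
        · exact ⟨hc t ht, hanti Set.self_mem_Ici ht ht⟩
        · exact my_fneg x (lt_of_lt_of_le ha hx.1)
            (lt_of_le_of_lt hx.2 (by linarith [hub4 0 Set.self_mem_Ici]))
      obtain ⟨t0, ht0, hat0⟩ := hex
      filter_upwards [eventually_ge_atTop t0] with t ht
      exact lt_of_le_of_lt (hanti ht0 (le_trans ht0 ht) ht) hat0
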